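/- Let V be an (N+1)-dimensional inner-product space and S its sphere of radius r, i.e. S = {v ∈ V : ‖v‖ = r}. Then for every subspace F (of any ambient Hilbert space H containing V) with dim F ≤ N, sup_{v∈S} dist(v, F) ≥ r. -/

import Mathlib

/-- An `N`-dimensional subspace cannot approximate the radius-`r` sphere of an
`(N+1)`-dimensional subspace better than `r`:
`sup_{v ∈ V, ‖v‖ = r} dist(v, F) ≥ r`. -/
theorem stmt14 {H : Type*} [NormedAddCommGroup H] [InnerProductSpace ℝ H]
    (N : ℕ) (V : Submodule ℝ H) [FiniteDimensional ℝ V]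
    (hV : Module.finrank ℝ V = N + 1)
    (r : ℝ) (hr : 0 ≤ r)
    (F : Submodule ℝ H) [FiniteDimensional ℝ F] (hF : Module.finrank ℝ F ≤ N) :
    r ≤ sSup ((fun v => Metric.infDist v (F : Set H)) ''
      {v : H | v ∈ V ∧ ‖v‖ = r}) := by
  classical
  -- find a nonzero vector of V orthogonal to F
  set f : V →ₗ[ℝ] F := F.orthogonalProjectionOnto.toLinearMap ∘ₗ V.subtype
  have hker : ∃ v : V, v ≠ 0 ∧ f v = 0 := by
    by_contra h
    push_neg at h
    have hinj : Function.Injective f := by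
      rw [← LinearMap.ker_eq_bot, LinearMap.ker_eq_bot']
      intro v hv
      by_contra hv0
      exact (h v hv0) hv
    have := LinearMap.finrank_le_finrank_of_injective hinj
    omega
  obtain ⟨v, hv0, hfv⟩ := hker
  have hvF : (v : H) ∈ Fᗮ := by
    rw [← Submodule.orthogonalProjectionOnto_eq_zero_iff]
    exact hfv
  have hvn : (v : H) ≠ 0 := fun h => hv0 (Subtype.ext h)
  set w : H := (r / ‖(v : H)‖) • (v : H) with hw
  have hwV : w ∈ V := V.smul_mem _ v.2
  have hwF : w ∈ Fᗮ := Fᗮ.smul_mem _ hvF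
  have hwnorm : ‖w‖ = r := by
    rw [hw, norm_smul, norm_div, Real.norm_eq_abs, abs_of_nonneg hr, norm_norm,
      div_mul_cancel₀ _ (norm_ne_zero_iff.mpr hvn)]
  have hFne : (F : Set H).Nonempty := ⟨0, F.zero_mem⟩
  have hlow : r ≤ Metric.infDist w (F : Set H) := by
    rw [← not_lt, Metric.infDist_lt_iff hFne]
    push_neg
    intro y hy
    have horth : inner ℝ y w = (0 : ℝ) := hwF y hy
    have horth' : inner ℝ w y = (0 : ℝ) := by rw [real_inner_comm]; exact horth
    have hsq : ‖w - y‖ ^ 2 = ‖w‖ ^ 2 + ‖y‖ ^ 2 := by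
      rw [← real_inner_self_eq_norm_sq, ← real_inner_self_eq_norm_sq,
        ← real_inner_self_eq_norm_sq, inner_sub_sub_self, horth, horth']
      ring
    have hsq2 : r ^ 2 ≤ ‖w - y‖ ^ 2 := by
      rw [hsq, hwnorm]
      nlinarith [sq_nonneg ‖y‖]
    rw [dist_eq_norm]
    nlinarith [norm_nonneg (w - y)]
  refine hlow.trans (le_csSup ?_ ⟨w, ⟨hwV, hwnorm⟩, rfl⟩)
  refine ⟨r, ?_⟩
  rintro x ⟨u, ⟨-, hu⟩, rfl⟩
  calc Metric.infDist u (F : Set H) ≤ dist u 0 := Metric.infDist_le_dist_of_mem F.zero_mem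
    _ = r := by rw [dist_zero_right, hu]
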